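/- arXiv:1501.00046 — 5 statements merged into one kernel-verified Lean document; each statement's English description precedes it below -/
import Mathlib

section
/- For any pair of complex vectors a, b of length L and a random vector φ with independent Rademacher entries (each ±1 with probability 1/2), the expectation E[|⟨a,φ⟩|²·|⟨b,φ⟩|²] ≤ 3‖a‖₂²‖b‖₂² − 2⟨|a|²,|b|²⟩, where |a|² denotes the entrywise squared modulus and the inner product is ⟨a,φ⟩ = Σᵢ āᵢφᵢ. -/
open Complex Finset

/-- Rademacher sign vector from a boolean vector. -/
noncomputable def rademacherSign {L : ℕ} (s : Fin L → Bool) (i : Fin L) : ℝ :=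
  if s i then 1 else -1

/-- Expectation over iid uniform Rademacher vectors, modeled as the average over
all `2^L` sign patterns. -/
noncomputable def rademacherExp (L : ℕ) (f : (Fin L → ℝ) → ℝ) : ℝ :=
  (1 / 2 ^ L : ℝ) * ∑ s : Fin L → Bool, f (rademacherSign s)

section helpers

lemma flip_inv {L : ℕ} (i : Fin L) :
    Function.Involutive (fun s : Fin L → Bool => Function.update s i (!(s i))) := by
  intro s; simp [Function.update_self, Function.update_idem]

lemma sum_flip_eq_zero {L : ℕ} (i : Fin L) (f : (Fin L → Bool) → ℂ)
    (h : ∀ s, f (Function.update s i (!(s i))) = - f s) :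
    ∑ s : Fin L → Bool, f s = 0 := by
  have key := Equiv.sum_comp (Function.Involutive.toPerm _ (flip_inv i)) f
  have h2 : ∑ s : Fin L → Bool, f ((Function.Involutive.toPerm _ (flip_inv i)) s)
      = ∑ s : Fin L → Bool, - f s := Finset.sum_congr rfl (fun s _ => h s)
  rw [h2, Finset.sum_neg_distrib] at key
  linear_combination (-(1:ℂ)/2) * key

lemma sign_update_self {L : ℕ} (s : Fin L → Bool) (i : Fin L) :
    rademacherSign (Function.update s i (!(s i))) i = - rademacherSign s i := by
  simp [rademacherSign, Function.update_self]; cases s i <;> simp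

lemma sign_update_ne {L : ℕ} (s : Fin L → Bool) {i j : Fin L} (h : j ≠ i) :
    rademacherSign (Function.update s i (!(s i))) j = rademacherSign s j := by
  simp [rademacherSign, Function.update_of_ne h]

lemma sign_sq {L : ℕ} (s : Fin L → Bool) (i : Fin L) :
    (rademacherSign s i : ℂ) * (rademacherSign s i : ℂ) = 1 := by
  simp [rademacherSign]; cases s i <;> simp

lemma card_bool_vec (L : ℕ) : (Finset.univ : Finset (Fin L → Bool)).card = 2 ^ L := by
  simp

lemma E2 {L : ℕ} (k l : Fin L) :
    ∑ s : Fin L → Bool, (rademacherSign s k : ℂ) * (rademacherSign s l : ℂ)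
      = if k = l then (2:ℂ)^L else 0 := by
  by_cases h : k = l
  · subst h
    simp only [if_pos rfl]
    rw [Finset.sum_congr rfl (fun s _ => sign_sq s k)]
    simp [card_bool_vec]
  · rw [if_neg h]
    apply sum_flip_eq_zero k
    intro s
    rw [sign_update_self, sign_update_ne s (Ne.symm h)]
    push_cast
    ring

lemma Eodd {L : ℕ} (i j k l : Fin L) (hj : i ≠ j) (hk : i ≠ k) (hl : i ≠ l) :
    ∑ s : Fin L → Bool, (rademacherSign s i : ℂ) * (rademacherSign s j : ℂ)
      * (rademacherSign s k : ℂ) * (rademacherSign s l : ℂ) = 0 := by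
  apply sum_flip_eq_zero i
  intro s
  rw [sign_update_self, sign_update_ne s (Ne.symm hj), sign_update_ne s (Ne.symm hk),
    sign_update_ne s (Ne.symm hl)]
  push_cast; ring

lemma E4 {L : ℕ} (i j k l : Fin L) :
    ∑ s : Fin L → Bool, (rademacherSign s i : ℂ) * (rademacherSign s j : ℂ)
      * (rademacherSign s k : ℂ) * (rademacherSign s l : ℂ)
    = (2:ℂ)^L * ((if i = j then 1 else 0) * (if k = l then 1 else 0)
        + (if i = k then 1 else 0) * (if j = l then 1 else 0)
        + (if i = l then 1 else 0) * (if j = k then 1 else 0)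
        - 2 * (if i = j ∧ j = k ∧ k = l then 1 else 0)) := by
  by_cases hij : i = j
  · subst hij
    have hred : ∀ s : Fin L → Bool,
        (rademacherSign s i : ℂ) * (rademacherSign s i : ℂ)
          * (rademacherSign s k : ℂ) * (rademacherSign s l : ℂ)
        = (rademacherSign s k : ℂ) * (rademacherSign s l : ℂ) := by
      intro s; rw [sign_sq]; ring
    rw [Finset.sum_congr rfl (fun s _ => hred s), E2]
    by_cases hkl : k = l
    · subst hkl
      by_cases hik : i = k <;> simp [hik] <;> ring
    · have h1 : ¬ (i = k ∧ i = l) := by rintro ⟨rfl, rfl⟩; exact hkl rfl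
      by_cases hik : i = k
      · subst hik; simp [hkl]
      · simp [hkl, hik]
  · by_cases hik : i = k
    · subst hik
      by_cases hjl : j = l
      · subst hjl
        have hred : ∀ s : Fin L → Bool,
            (rademacherSign s i : ℂ) * (rademacherSign s j : ℂ)
              * (rademacherSign s i : ℂ) * (rademacherSign s j : ℂ) = 1 := by
          intro s
          have h1 := sign_sq s i; have h2 := sign_sq s j
          linear_combination ((rademacherSign s j : ℂ) * (rademacherSign s j : ℂ)) * h1 + h2
        rw [Finset.sum_congr rfl (fun s _ => hred s)]
        simp [card_bool_vec, hij, Ne.symm hij]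
      · have hred : ∀ s : Fin L → Bool,
            (rademacherSign s i : ℂ) * (rademacherSign s j : ℂ)
              * (rademacherSign s i : ℂ) * (rademacherSign s l : ℂ)
            = (rademacherSign s j : ℂ) * (rademacherSign s l : ℂ) := by
          intro s
          have h1 := sign_sq s i
          linear_combination ((rademacherSign s j : ℂ) * (rademacherSign s l : ℂ)) * h1
        rw [Finset.sum_congr rfl (fun s _ => hred s), E2, if_neg hjl]
        simp [hij, hjl, Ne.symm hij]
    · by_cases hil : i = l
      · subst hil
        have hred : ∀ s : Fin L → Bool,
            (rademacherSign s i : ℂ) * (rademacherSign s j : ℂ)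
              * (rademacherSign s k : ℂ) * (rademacherSign s i : ℂ)
            = (rademacherSign s j : ℂ) * (rademacherSign s k : ℂ) := by
          intro s
          have h1 := sign_sq s i
          linear_combination ((rademacherSign s j : ℂ) * (rademacherSign s k : ℂ)) * h1
        rw [Finset.sum_congr rfl (fun s _ => hred s), E2]
        by_cases hjk : j = k <;> simp [hij, hik, hjk]
      · rw [Eodd i j k l hij hik hil]
        simp [hij, hik, hil]

lemma sum_ite_pull {α β : Type*} [Fintype α] [AddCommMonoid β] (P : Prop) [Decidable P]
    (f : α → β) : ∑ x : α, (if P then f x else 0) = if P then ∑ x : α, f x else 0 := by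
  split <;> simp

lemma comb_identity (L : ℕ) (a b : Fin L → ℂ) :
    ∑ i, ∑ j, ∑ k, ∑ l, (starRingEnd ℂ (a i) * a j * starRingEnd ℂ (b k) * b l) *
      ((if i = j then 1 else 0) * (if k = l then 1 else 0)
        + (if i = k then 1 else 0) * (if j = l then 1 else 0)
        + (if i = l then 1 else 0) * (if j = k then 1 else 0)
        - 2 * (if i = j ∧ j = k ∧ k = l then (1:ℂ) else 0))
    = (∑ i, starRingEnd ℂ (a i) * a i) * (∑ k, starRingEnd ℂ (b k) * b k)
      + (∑ i, starRingEnd ℂ (a i) * starRingEnd ℂ (b i)) * (∑ j, a j * b j)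
      + (∑ i, starRingEnd ℂ (a i) * b i) * (∑ j, a j * starRingEnd ℂ (b j))
      - 2 * ∑ i, starRingEnd ℂ (a i) * a i * starRingEnd ℂ (b i) * b i := by
  simp only [mul_add, mul_sub, Finset.sum_add_distrib, Finset.sum_sub_distrib,
    mul_ite, mul_one, mul_zero, ite_and]
  simp only [sum_ite_pull, Finset.sum_ite_eq, Finset.sum_ite_eq', Finset.mem_univ, if_pos,
    Finset.mul_sum, Finset.sum_mul]
  congr 1
  congr 1
  congr 1
  · rw [Finset.sum_comm]
    exact Finset.sum_congr rfl fun x _ => Finset.sum_congr rfl fun y _ => by ring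
  · rw [Finset.sum_comm]
    exact Finset.sum_congr rfl fun x _ => Finset.sum_congr rfl fun y _ => by ring
  · rw [Finset.sum_comm]
    exact Finset.sum_congr rfl fun x _ => Finset.sum_congr rfl fun y _ => by ring
  · exact Finset.sum_congr rfl fun x _ => by ring

lemma expand4 (L : ℕ) (f g h p : Fin L → ℂ) :
    (∑ i, f i) * (∑ j, g j) * (∑ k, h k) * (∑ l, p l)
    = ∑ i, ∑ j, ∑ k, ∑ l, f i * g j * h k * p l := by
  simp only [Finset.sum_mul, Finset.mul_sum]
  conv_lhs => enter [2, a, 2, b]; rw [Finset.sum_comm]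
  conv_lhs => enter [2, a]; rw [Finset.sum_comm]
  rw [Finset.sum_comm]
  conv_lhs => enter [2, a, 2, b]; rw [Finset.sum_comm]
  conv_lhs => enter [2, a]; rw [Finset.sum_comm]
  conv_lhs => enter [2, a, 2, b]; rw [Finset.sum_comm]

lemma conj_mul_self (z : ℂ) : starRingEnd ℂ z * z = ((‖z‖ ^ 2 : ℝ) : ℂ) := by
  rw [mul_comm, Complex.mul_conj, Complex.sq_norm]

lemma mul_conj_self (z : ℂ) : z * starRingEnd ℂ z = ((‖z‖ ^ 2 : ℝ) : ℂ) := by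
  rw [Complex.mul_conj, Complex.sq_norm]

lemma key_identity (L : ℕ) (a b : Fin L → ℂ) :
    ∑ s : Fin L → Bool,
        (∑ i, starRingEnd ℂ (a i) * (rademacherSign s i : ℂ))
      * (∑ j, a j * (rademacherSign s j : ℂ))
      * (∑ k, starRingEnd ℂ (b k) * (rademacherSign s k : ℂ))
      * (∑ l, b l * (rademacherSign s l : ℂ))
    = (2:ℂ)^L * ((∑ i, starRingEnd ℂ (a i) * a i) * (∑ k, starRingEnd ℂ (b k) * b k)
      + (∑ i, starRingEnd ℂ (a i) * starRingEnd ℂ (b i)) * (∑ j, a j * b j)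
      + (∑ i, starRingEnd ℂ (a i) * b i) * (∑ j, a j * starRingEnd ℂ (b j))
      - 2 * ∑ i, starRingEnd ℂ (a i) * a i * starRingEnd ℂ (b i) * b i) := by
  have step1 : ∀ s : Fin L → Bool,
      (∑ i, starRingEnd ℂ (a i) * (rademacherSign s i : ℂ))
      * (∑ j, a j * (rademacherSign s j : ℂ))
      * (∑ k, starRingEnd ℂ (b k) * (rademacherSign s k : ℂ))
      * (∑ l, b l * (rademacherSign s l : ℂ))
      = ∑ i, ∑ j, ∑ k, ∑ l, (starRingEnd ℂ (a i) * a j * starRingEnd ℂ (b k) * b l)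
          * ((rademacherSign s i : ℂ) * (rademacherSign s j : ℂ)
            * (rademacherSign s k : ℂ) * (rademacherSign s l : ℂ)) := by
    intro s
    rw [expand4]
    exact Finset.sum_congr rfl fun i _ => Finset.sum_congr rfl fun j _ =>
      Finset.sum_congr rfl fun k _ => Finset.sum_congr rfl fun l _ => by ring
  rw [Finset.sum_congr rfl (fun s _ => step1 s)]
  have step2 : ∑ s : Fin L → Bool, ∑ i, ∑ j, ∑ k, ∑ l,
      (starRingEnd ℂ (a i) * a j * starRingEnd ℂ (b k) * b l)
        * ((rademacherSign s i : ℂ) * (rademacherSign s j : ℂ)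
          * (rademacherSign s k : ℂ) * (rademacherSign s l : ℂ))
      = ∑ i, ∑ j, ∑ k, ∑ l,
          (starRingEnd ℂ (a i) * a j * starRingEnd ℂ (b k) * b l)
          * ((2:ℂ)^L * ((if i = j then 1 else 0) * (if k = l then 1 else 0)
            + (if i = k then 1 else 0) * (if j = l then 1 else 0)
            + (if i = l then 1 else 0) * (if j = k then 1 else 0)
            - 2 * (if i = j ∧ j = k ∧ k = l then 1 else 0))) := by
    rw [Finset.sum_comm]
    refine Finset.sum_congr rfl fun i _ => ?_
    rw [Finset.sum_comm]
    refine Finset.sum_congr rfl fun j _ => ?_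
    rw [Finset.sum_comm]
    refine Finset.sum_congr rfl fun k _ => ?_
    rw [Finset.sum_comm]
    refine Finset.sum_congr rfl fun l _ => ?_
    rw [← Finset.mul_sum, E4]
  rw [step2]
  rw [show ∀ X : ℂ, (2:ℂ)^L * X = (2:ℂ)^L * X from fun _ => rfl]
  calc ∑ i, ∑ j, ∑ k, ∑ l,
          (starRingEnd ℂ (a i) * a j * starRingEnd ℂ (b k) * b l)
          * ((2:ℂ)^L * ((if i = j then 1 else 0) * (if k = l then 1 else 0)
            + (if i = k then 1 else 0) * (if j = l then 1 else 0)
            + (if i = l then 1 else 0) * (if j = k then 1 else 0)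
            - 2 * (if i = j ∧ j = k ∧ k = l then 1 else 0)))
      = (2:ℂ)^L * ∑ i, ∑ j, ∑ k, ∑ l,
          (starRingEnd ℂ (a i) * a j * starRingEnd ℂ (b k) * b l)
          * ((if i = j then 1 else 0) * (if k = l then 1 else 0)
            + (if i = k then 1 else 0) * (if j = l then 1 else 0)
            + (if i = l then 1 else 0) * (if j = k then 1 else 0)
            - 2 * (if i = j ∧ j = k ∧ k = l then 1 else 0)) := by
        simp only [Finset.mul_sum]
        exact Finset.sum_congr rfl fun i _ => Finset.sum_congr rfl fun j _ =>
          Finset.sum_congr rfl fun k _ => Finset.sum_congr rfl fun l _ => by ring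
    _ = _ := by rw [comb_identity]

end helpers

/-- For complex vectors `a, b` and an iid Rademacher vector `φ`,
`E[|⟨a,φ⟩|² |⟨b,φ⟩|²] ≤ 3‖a‖₂²‖b‖₂² − 2⟨|a|²,|b|²⟩`. -/
theorem rademacher_fourth_moment_pair (L : ℕ) (a b : Fin L → ℂ) :
    rademacherExp L (fun φ =>
        ‖∑ i, (starRingEnd ℂ) (a i) * (φ i : ℂ)‖ ^ 2 *
        ‖∑ i, (starRingEnd ℂ) (b i) * (φ i : ℂ)‖ ^ 2)
      ≤ 3 * (∑ i, ‖a i‖ ^ 2) * (∑ i, ‖b i‖ ^ 2)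
        - 2 * ∑ i, ‖a i‖ ^ 2 * ‖b i‖ ^ 2 := by
  set Na : ℝ := ∑ i, ‖a i‖ ^ 2 with hNa
  set Nb : ℝ := ∑ i, ‖b i‖ ^ 2 with hNb
  set R : ℝ := ∑ i, ‖a i‖ ^ 2 * ‖b i‖ ^ 2 with hR
  set P : ℂ := ∑ i, starRingEnd ℂ (a i) * starRingEnd ℂ (b i) with hP
  set Q : ℂ := ∑ i, starRingEnd ℂ (a i) * b i with hQ
  -- pointwise: |A|²|B|² is the real part of A ⋅ conj A ⋅ B ⋅ conj B
  have hpoint : ∀ s : Fin L → Bool,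
      ‖∑ i, (starRingEnd ℂ) (a i) * ((rademacherSign s i : ℝ) : ℂ)‖ ^ 2 *
      ‖∑ i, (starRingEnd ℂ) (b i) * ((rademacherSign s i : ℝ) : ℂ)‖ ^ 2
      = ((∑ i, starRingEnd ℂ (a i) * (rademacherSign s i : ℂ))
        * (∑ j, a j * (rademacherSign s j : ℂ))
        * (∑ k, starRingEnd ℂ (b k) * (rademacherSign s k : ℂ))
        * (∑ l, b l * (rademacherSign s l : ℂ))).re := by
    intro s
    have hA : (∑ j, a j * (rademacherSign s j : ℂ))
        = starRingEnd ℂ (∑ i, starRingEnd ℂ (a i) * (rademacherSign s i : ℂ)) := by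
      rw [map_sum]
      exact Finset.sum_congr rfl fun i _ => by
        simp [map_mul, Complex.conj_conj, Complex.conj_ofReal]
    have hB : (∑ l, b l * (rademacherSign s l : ℂ))
        = starRingEnd ℂ (∑ k, starRingEnd ℂ (b k) * (rademacherSign s k : ℂ)) := by
      rw [map_sum]
      exact Finset.sum_congr rfl fun i _ => by
        simp [map_mul, Complex.conj_conj, Complex.conj_ofReal]
    rw [hA, hB]
    set A := ∑ i, starRingEnd ℂ (a i) * (rademacherSign s i : ℂ)
    set B := ∑ k, starRingEnd ℂ (b k) * (rademacherSign s k : ℂ)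
    have : A * starRingEnd ℂ A * B * starRingEnd ℂ B
        = ((‖A‖ ^ 2 * ‖B‖ ^ 2 : ℝ) : ℂ) := by
      rw [show A * starRingEnd ℂ A * B * starRingEnd ℂ B
          = (A * starRingEnd ℂ A) * (B * starRingEnd ℂ B) by ring,
        mul_conj_self, mul_conj_self, ← Complex.ofReal_mul]
    rw [this, Complex.ofReal_re]
  -- exact value of the expectation
  have hsum : ∑ s : Fin L → Bool,
      (‖∑ i, (starRingEnd ℂ) (a i) * ((rademacherSign s i : ℝ) : ℂ)‖ ^ 2 *
       ‖∑ i, (starRingEnd ℂ) (b i) * ((rademacherSign s i : ℝ) : ℂ)‖ ^ 2)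
      = (2:ℝ)^L * (Na * Nb + ‖P‖ ^ 2 + ‖Q‖ ^ 2 - 2 * R) := by
    rw [Finset.sum_congr rfl (fun s _ => hpoint s), ← Complex.re_sum, key_identity]
    have e1 : (∑ i, starRingEnd ℂ (a i) * a i) = ((Na : ℝ) : ℂ) := by
      rw [hNa, Complex.ofReal_sum]
      exact Finset.sum_congr rfl fun i _ => conj_mul_self (a i)
    have e2 : (∑ k, starRingEnd ℂ (b k) * b k) = ((Nb : ℝ) : ℂ) := by
      rw [hNb, Complex.ofReal_sum]
      exact Finset.sum_congr rfl fun i _ => conj_mul_self (b i)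
    have e3 : (∑ j, a j * b j) = starRingEnd ℂ P := by
      rw [hP, map_sum]
      exact Finset.sum_congr rfl fun i _ => by simp [map_mul]
    have e4 : (∑ j, a j * starRingEnd ℂ (b j)) = starRingEnd ℂ Q := by
      rw [hQ, map_sum]
      exact Finset.sum_congr rfl fun i _ => by simp [map_mul]
    have e5 : (∑ i, starRingEnd ℂ (a i) * a i * starRingEnd ℂ (b i) * b i) = ((R : ℝ) : ℂ) := by
      rw [hR, Complex.ofReal_sum]
      refine Finset.sum_congr rfl fun i _ => ?_
      rw [show starRingEnd ℂ (a i) * a i * starRingEnd ℂ (b i) * b i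
          = (starRingEnd ℂ (a i) * a i) * (starRingEnd ℂ (b i) * b i) by ring,
        conj_mul_self, conj_mul_self, ← Complex.ofReal_mul]
    rw [e1, e2, e3, e4, e5, mul_conj_self, mul_conj_self]
    rw [show (2:ℂ)^L * (((Na:ℝ):ℂ) * ((Nb:ℝ):ℂ) + ((‖P‖ ^ 2 : ℝ) : ℂ)
          + ((‖Q‖ ^ 2 : ℝ) : ℂ) - 2 * ((R:ℝ):ℂ))
        = (((2:ℝ)^L * (Na * Nb + ‖P‖ ^ 2 + ‖Q‖ ^ 2 - 2 * R) : ℝ) : ℂ) by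
      push_cast; ring]
    rw [Complex.ofReal_re]
  have hval : rademacherExp L (fun φ =>
        ‖∑ i, (starRingEnd ℂ) (a i) * (φ i : ℂ)‖ ^ 2 *
        ‖∑ i, (starRingEnd ℂ) (b i) * (φ i : ℂ)‖ ^ 2)
      = Na * Nb + ‖P‖ ^ 2 + ‖Q‖ ^ 2 - 2 * R := by
    rw [rademacherExp, hsum]
    have h2L : (2:ℝ)^L ≠ 0 := by positivity
    field_simp
  rw [hval]
  -- Cauchy–Schwarz bounds
  have hCS : ∀ c : Fin L → ℂ, (‖∑ i, starRingEnd ℂ (a i) * c i‖) ^ 2 ≤ Na * Nb →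
      True := fun _ _ => trivial
  have habs : ∀ (f : Fin L → ℂ), (∀ i, ‖f i‖ = ‖a i‖ * ‖b i‖) →
      ‖∑ i, f i‖ ^ 2 ≤ Na * Nb := by
    intro f hf
    have h1 : ‖∑ i, f i‖ ≤ ∑ i, ‖a i‖ * ‖b i‖ := by
      refine le_trans (norm_sum_le _ _) ?_
      exact le_of_eq (Finset.sum_congr rfl fun i _ => hf i)
    have h2 : (∑ i, ‖a i‖ * ‖b i‖) ^ 2 ≤ Na * Nb := by
      rw [hNa, hNb]
      exact Finset.sum_mul_sq_le_sq_mul_sq _ _ _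
    have h3 : (0:ℝ) ≤ ‖∑ i, f i‖ := norm_nonneg _
    calc ‖∑ i, f i‖ ^ 2
        ≤ (∑ i, ‖a i‖ * ‖b i‖) ^ 2 := by
          apply pow_le_pow_left₀ h3 h1
      _ ≤ Na * Nb := h2
  have hPb : ‖P‖ ^ 2 ≤ Na * Nb := by
    apply habs
    intro i
    simp [hP, map_mul]
  have hQb : ‖Q‖ ^ 2 ≤ Na * Nb := by
    apply habs
    intro i
    simp [hQ, map_mul]
  nlinarith [hPb, hQb]
end

section
/- For any complex vector a of length L and a random vector φ with independent Rademacher entries, E[|⟨a,φ⟩|⁴] ≤ 3‖a‖₂⁴ − 2‖a‖₄⁴. -/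
open Complex Finset

private lemma sum_split {n : ℕ} (f : (Fin (n + 1) → Bool) → ℝ) :
    ∑ s : Fin (n + 1) → Bool, f s = ∑ b : Bool, ∑ t : Fin n → Bool, f (Fin.cons b t) := by
  rw [← (Fin.consEquiv (fun _ => Bool)).sum_comp f, Fintype.sum_prod_type]
  rfl

private lemma inner_cons {n : ℕ} (c : Fin (n + 1) → ℂ) (b : Bool) (t : Fin n → Bool) :
    (∑ i, c i * (rademacherSign (Fin.cons b t) i : ℂ))
      = c 0 * (rademacherSign (fun _ : Fin 1 => b) 0 : ℂ)
        + ∑ i : Fin n, c i.succ * (rademacherSign t i : ℂ) := by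
  rw [Fin.sum_univ_succ]
  simp [rademacherSign]

private lemma re_sq_le (z c : ℂ) :
    ((z * (starRingEnd ℂ) c).re) ^ 2 ≤ Complex.normSq z * Complex.normSq c := by
  calc ((z * (starRingEnd ℂ) c).re) ^ 2 ≤ Complex.normSq (z * (starRingEnd ℂ) c) := by
        rw [Complex.normSq_apply]; nlinarith [sq_nonneg ((z * (starRingEnd ℂ) c).im)]
    _ = Complex.normSq z * Complex.normSq c := by
        rw [map_mul, Complex.normSq_conj]

private lemma pointwise4 (z c : ℂ) :
    ‖z + c‖ ^ 4 + ‖z - c‖ ^ 4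
      ≤ 2 * (‖z‖ ^ 2) ^ 2 + 12 * (‖z‖ ^ 2) * (‖c‖ ^ 2)
        + 2 * (‖c‖ ^ 2) ^ 2 := by
  have h1 : ‖z + c‖ ^ 4 = (Complex.normSq (z + c)) ^ 2 := by
    rw [← Complex.sq_norm]; ring
  have h2 : ‖z - c‖ ^ 4 = (Complex.normSq (z - c)) ^ 2 := by
    rw [← Complex.sq_norm]; ring
  rw [h1, h2, Complex.sq_norm, Complex.sq_norm]
  have ha : Complex.normSq (z + c)
      = Complex.normSq z + Complex.normSq c + 2 * (z * (starRingEnd ℂ) c).re :=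
    Complex.normSq_add z c
  have hb : Complex.normSq (z - c)
      = Complex.normSq z + Complex.normSq c - 2 * (z * (starRingEnd ℂ) c).re :=
    Complex.normSq_sub z c
  rw [ha, hb]
  nlinarith [re_sq_le z c]

private lemma pointwise2 (z c : ℂ) :
    ‖z + c‖ ^ 2 + ‖z - c‖ ^ 2
      = 2 * ‖z‖ ^ 2 + 2 * ‖c‖ ^ 2 := by
  rw [Complex.sq_norm, Complex.sq_norm, Complex.sq_norm, Complex.sq_norm,
    Complex.normSq_add]
  have hb : Complex.normSq (z - c)
      = Complex.normSq z + Complex.normSq c - 2 * (z * (starRingEnd ℂ) c).re :=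
    Complex.normSq_sub z c
  rw [hb]; ring

private lemma sum2 : ∀ (n : ℕ) (c : Fin n → ℂ),
    ∑ s : Fin n → Bool, ‖∑ i, c i * (rademacherSign s i : ℂ)‖ ^ 2
      = 2 ^ n * ∑ i, ‖c i‖ ^ 2 := by
  intro n
  induction n with
  | zero => intro c; simp
  | succ n ih =>
    intro c
    rw [sum_split (fun s => ‖∑ i, c i * (rademacherSign s i : ℂ)‖ ^ 2)]
    have hε : ∀ b : Bool, ∀ t : Fin n → Bool,
        ‖∑ i, c i * (rademacherSign (Fin.cons b t) i : ℂ)‖ ^ 2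
          = ‖(∑ i : Fin n, c i.succ * (rademacherSign t i : ℂ))
              + (if b then c 0 else -(c 0))‖ ^ 2 := by
      intro b t
      rw [inner_cons]
      cases b <;> simp [rademacherSign, add_comm]
    have hsum : ∀ b : Bool, ∑ t : Fin n → Bool,
        ‖∑ i, c i * (rademacherSign (Fin.cons b t) i : ℂ)‖ ^ 2
          = ∑ t : Fin n → Bool,
            ‖(∑ i : Fin n, c i.succ * (rademacherSign t i : ℂ))
              + (if b then c 0 else -(c 0))‖ ^ 2 :=
      fun b => Finset.sum_congr rfl (fun t _ => hε b t)
    rw [Fintype.sum_bool, hsum true, hsum false, ← Finset.sum_add_distrib]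
    have : ∀ t : Fin n → Bool,
        ‖(∑ i : Fin n, c i.succ * (rademacherSign t i : ℂ)) + c 0‖ ^ 2
          + ‖(∑ i : Fin n, c i.succ * (rademacherSign t i : ℂ)) + -(c 0)‖ ^ 2
          = 2 * ‖∑ i : Fin n, c i.succ * (rademacherSign t i : ℂ)‖ ^ 2
            + 2 * ‖c 0‖ ^ 2 := by
      intro t
      have := pointwise2 (∑ i : Fin n, c i.succ * (rademacherSign t i : ℂ)) (c 0)
      simpa [sub_eq_add_neg] using this
    rw [Finset.sum_congr rfl (fun t _ => by simpa using this t)]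
    rw [Finset.sum_add_distrib, ← Finset.mul_sum, ih (fun i => c i.succ)]
    rw [Finset.sum_const, Fin.sum_univ_succ]
    simp [Finset.card_univ]
    ring

private lemma sum4 : ∀ (n : ℕ) (c : Fin n → ℂ),
    ∑ s : Fin n → Bool, ‖∑ i, c i * (rademacherSign s i : ℂ)‖ ^ 4
      ≤ 2 ^ n * (3 * (∑ i, ‖c i‖ ^ 2) ^ 2 - 2 * ∑ i, ‖c i‖ ^ 4) := by
  intro n
  induction n with
  | zero => intro c; simp
  | succ n ih =>
    intro c
    rw [sum_split (fun s => ‖∑ i, c i * (rademacherSign s i : ℂ)‖ ^ 4)]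
    set T : (Fin n → Bool) → ℂ := fun t => ∑ i : Fin n, c i.succ * (rademacherSign t i : ℂ)
      with hT
    have hε : ∀ b : Bool, ∀ t : Fin n → Bool,
        ‖∑ i, c i * (rademacherSign (Fin.cons b t) i : ℂ)‖ ^ 4
          = ‖T t + (if b then c 0 else -(c 0))‖ ^ 4 := by
      intro b t
      rw [inner_cons]
      cases b <;> simp [rademacherSign, add_comm, hT]
    have hsum : ∀ b : Bool, ∑ t : Fin n → Bool,
        ‖∑ i, c i * (rademacherSign (Fin.cons b t) i : ℂ)‖ ^ 4
          = ∑ t : Fin n → Bool, ‖T t + (if b then c 0 else -(c 0))‖ ^ 4 :=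
      fun b => Finset.sum_congr rfl (fun t _ => hε b t)
    rw [Fintype.sum_bool, hsum true, hsum false, ← Finset.sum_add_distrib]
    have hpt : ∀ t : Fin n → Bool,
        ‖T t + c 0‖ ^ 4 + ‖T t + -(c 0)‖ ^ 4
          ≤ 2 * (‖T t‖ ^ 2) ^ 2
            + 12 * (‖T t‖ ^ 2) * (‖c 0‖ ^ 2)
            + 2 * (‖c 0‖ ^ 2) ^ 2 := by
      intro t
      have := pointwise4 (T t) (c 0)
      simpa [sub_eq_add_neg] using this
    have step1 : ∑ t : Fin n → Bool,
        (‖T t + c 0‖ ^ 4 + ‖T t + -(c 0)‖ ^ 4)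
          ≤ ∑ t : Fin n → Bool, (2 * (‖T t‖ ^ 2) ^ 2
            + 12 * (‖T t‖ ^ 2) * (‖c 0‖ ^ 2)
            + 2 * (‖c 0‖ ^ 2) ^ 2) :=
      Finset.sum_le_sum (fun t _ => hpt t)
    have habs4 : ∀ t : Fin n → Bool, (‖T t‖ ^ 2) ^ 2 = ‖T t‖ ^ 4 := by
      intro t; ring
    have step2 : ∑ t : Fin n → Bool, (2 * (‖T t‖ ^ 2) ^ 2
            + 12 * (‖T t‖ ^ 2) * (‖c 0‖ ^ 2)
            + 2 * (‖c 0‖ ^ 2) ^ 2)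
          = 2 * (∑ t : Fin n → Bool, ‖T t‖ ^ 4)
            + 12 * (‖c 0‖ ^ 2) * (∑ t : Fin n → Bool, ‖T t‖ ^ 2)
            + 2 ^ n * (2 * (‖c 0‖ ^ 2) ^ 2) := by
      rw [Finset.sum_add_distrib, Finset.sum_add_distrib, ← Finset.mul_sum,
        Finset.sum_const, Finset.sum_congr rfl (fun t _ => by rw [habs4 t])]
      have : ∑ t : Fin n → Bool, 12 * (‖T t‖ ^ 2) * (‖c 0‖ ^ 2)
          = 12 * (‖c 0‖ ^ 2) * ∑ t : Fin n → Bool, ‖T t‖ ^ 2 := by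
        rw [Finset.mul_sum]; exact Finset.sum_congr rfl (fun t _ => by ring)
      rw [this]
      simp [Finset.card_univ]
    have h2 : ∑ t : Fin n → Bool, ‖T t‖ ^ 2
        = 2 ^ n * ∑ i : Fin n, ‖c i.succ‖ ^ 2 := sum2 n (fun i => c i.succ)
    have h4 : ∑ t : Fin n → Bool, ‖T t‖ ^ 4
        ≤ 2 ^ n * (3 * (∑ i : Fin n, ‖c i.succ‖ ^ 2) ^ 2
            - 2 * ∑ i : Fin n, ‖c i.succ‖ ^ 4) := ih (fun i => c i.succ)
    have hgoal : 2 * (∑ t : Fin n → Bool, ‖T t‖ ^ 4)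
            + 12 * (‖c 0‖ ^ 2) * (∑ t : Fin n → Bool, ‖T t‖ ^ 2)
            + 2 ^ n * (2 * (‖c 0‖ ^ 2) ^ 2)
          ≤ 2 ^ (n + 1) * (3 * (∑ i, ‖c i‖ ^ 2) ^ 2
            - 2 * ∑ i, ‖c i‖ ^ 4) := by
      rw [Fin.sum_univ_succ (fun i => ‖c i‖ ^ 2),
        Fin.sum_univ_succ (fun i => ‖c i‖ ^ 4), h2]
      have hc4 : ‖c 0‖ ^ 4 = (‖c 0‖ ^ 2) ^ 2 := by ring
      have hpow : (0:ℝ) < 2 ^ n := by positivity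
      rw [hc4, show (2:ℝ) ^ (n + 1) = 2 ^ n * 2 from pow_succ 2 n]
      nlinarith [h4]
    calc ∑ t : Fin n → Bool,
        (‖T t + c 0‖ ^ 4 + ‖T t + -(c 0)‖ ^ 4)
        ≤ _ := step1
      _ = _ := step2
      _ ≤ _ := hgoal

/-- For a complex vector `a` and an iid Rademacher vector `φ`,
`E[|⟨a,φ⟩|⁴] ≤ 3‖a‖₂⁴ − 2‖a‖₄⁴`. -/
theorem rademacher_fourth_moment (L : ℕ) (a : Fin L → ℂ) :
    rademacherExp L (fun φ => ‖∑ i, (starRingEnd ℂ) (a i) * (φ i : ℂ)‖ ^ 4)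
      ≤ 3 * (∑ i, ‖a i‖ ^ 2) ^ 2 - 2 * ∑ i, ‖a i‖ ^ 4 := by
  have h := sum4 L (fun i => (starRingEnd ℂ) (a i))
  simp only [Complex.norm_conj] at h
  unfold rademacherExp
  rw [div_mul_eq_mul_div, one_mul, div_le_iff₀ (by positivity : (0:ℝ) < 2 ^ L)]
  exact h.trans_eq (mul_comm _ _)
end

section
/- Let G = (X ∪ H, E) be a bipartite graph on vertex sets X = {x₁,…,x_L} and H = {h₁,…,h_L} corresponding to the nonzero entries of vectors x, h ∈ ℂ^L, where {xᵢ, hⱼ} ∈ E iff the product xᵢhⱼ is observed and nonzero. If G has two or more connected components each containing at least two vertices, then the rank-one matrix h xᵀ is not uniquely determined (up to the global scaling ambiguity) by the observed entries: there exists a pair (h', x') with h'x'ᵀ ≠ c·hxᵀ for every scalar c, agreeing with hxᵀ on all observed entries. -/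
open Finset

/-- The bipartite "observation" graph on vertices `X ⊕ H`: the vertex `xᵢ = Sum.inl i`
is adjacent to `hⱼ = Sum.inr j` iff the entry `(j,i)` of `h xᵀ` is observed
(`(j,i) ∈ S`) and the product `xᵢ hⱼ` is nonzero. -/
def obsGraph {L : ℕ} (S : Set (Fin L × Fin L)) (x h : Fin L → ℂ) :
    SimpleGraph (Fin L ⊕ Fin L) :=
  SimpleGraph.fromRel (fun u v =>
    ∃ i j : Fin L, u = Sum.inl i ∧ v = Sum.inr j ∧ (j, i) ∈ S ∧ x i * h j ≠ 0)

lemma exists_edge_of_reachable_ne {L : ℕ} (S : Set (Fin L × Fin L)) (x h : Fin L → ℂ)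
    (u u' : Fin L ⊕ Fin L) (hne : u' ≠ u) (hr : (obsGraph S x h).Reachable u u') :
    ∃ i j : Fin L, x i * h j ≠ 0 ∧ (obsGraph S x h).Reachable u (Sum.inl i) ∧
      (obsGraph S x h).Reachable u (Sum.inr j) := by
  obtain ⟨p⟩ := hr
  cases p with
  | nil => exact absurd rfl hne
  | @cons _ b _ hadj p =>
    have hrb : (obsGraph S x h).Reachable u b := ⟨SimpleGraph.Walk.cons hadj SimpleGraph.Walk.nil⟩
    have hru : (obsGraph S x h).Reachable u u := SimpleGraph.Reachable.refl u
    rw [obsGraph, SimpleGraph.fromRel_adj] at hadj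
    rcases hadj.2 with ⟨i, j, h1, h2, _, hnz⟩ | ⟨i, j, h1, h2, _, hnz⟩
    · exact ⟨i, j, hnz, h1 ▸ hru, h2 ▸ hrb⟩
    · exact ⟨i, j, hnz, h1 ▸ hrb, h2 ▸ hru⟩

lemma adj_of_obs {L : ℕ} (S : Set (Fin L × Fin L)) (x h : Fin L → ℂ)
    {i j : Fin L} (hS : (j, i) ∈ S) (hnz : x i * h j ≠ 0) :
    (obsGraph S x h).Adj (Sum.inl i) (Sum.inr j) := by
  rw [obsGraph, SimpleGraph.fromRel_adj]
  exact ⟨by simp, Or.inl ⟨i, j, rfl, rfl, hS, hnz⟩⟩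

/-- If the observation graph has two connected components each of order greater
than one, then the rank-one matrix `h xᵀ` is not determined by the observed
entries up to global scaling: some pair `(h', x')` agrees with `(h, x)` on all
observed entries of the product, yet `h' x'ᵀ` is not any scalar multiple of `h xᵀ`. -/
theorem blind_deconv_not_identifiable {L : ℕ} (S : Set (Fin L × Fin L))
    (x h : Fin L → ℂ)
    (u v : Fin L ⊕ Fin L)
    (hsep : ¬ (obsGraph S x h).Reachable u v)
    (hu : ∃ u' , u' ≠ u ∧ (obsGraph S x h).Reachable u u')
    (hv : ∃ v' , v' ≠ v ∧ (obsGraph S x h).Reachable v v') :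
    ∃ (h' x' : Fin L → ℂ),
      (∀ p ∈ S, h' p.1 * x' p.2 = h p.1 * x p.2) ∧
      ∀ c : ℂ, ∃ i j : Fin L, h' i * x' j ≠ c * (h i * x j) := by
  classical
  obtain ⟨u', hu1, hu2⟩ := hu
  obtain ⟨v', hv1, hv2⟩ := hv
  obtain ⟨i₀, j₀, hnz₀, hri₀, hrj₀⟩ := exists_edge_of_reachable_ne S x h u u' hu1 hu2
  obtain ⟨i₁, j₁, hnz₁, hri₁, hrj₁⟩ := exists_edge_of_reachable_ne S x h v v' hv1 hv2
  set G := obsGraph S x h with hG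
  refine ⟨fun j => if G.Reachable u (Sum.inr j) then 2⁻¹ * h j else h j,
    fun i => if G.Reachable u (Sum.inl i) then 2 * x i else x i, ?_, ?_⟩
  · rintro ⟨j, i⟩ hS
    simp only
    by_cases hz : x i * h j = 0
    · rcases mul_eq_zero.mp hz with h0 | h0 <;> split_ifs <;> simp [h0]
    · have hadj := adj_of_obs S x h hS hz
      have hiff : G.Reachable u (Sum.inl i) ↔ G.Reachable u (Sum.inr j) :=
        ⟨fun hr => hr.trans ⟨hadj.toWalk⟩, fun hr => hr.trans ⟨hadj.symm.toWalk⟩⟩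
      by_cases hri : G.Reachable u (Sum.inl i)
      · rw [if_pos hri, if_pos (hiff.mp hri)]
        field_simp
      · rw [if_neg hri, if_neg (fun hh => hri (hiff.mpr hh))]
  · intro c
    have hni₁ : ¬ G.Reachable u (Sum.inl i₁) := fun hr => hsep (hr.trans hri₁.symm)
    have hnj₁ : ¬ G.Reachable u (Sum.inr j₁) := fun hr => hsep (hr.trans hrj₁.symm)
    have hx₀ : x i₀ ≠ 0 := fun h0 => hnz₀ (by simp [h0])
    have hh₀ : h j₀ ≠ 0 := fun h0 => hnz₀ (by simp [h0])
    have hx₁ : x i₁ ≠ 0 := fun h0 => hnz₁ (by simp [h0])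
    have hh₁ : h j₁ ≠ 0 := fun h0 => hnz₁ (by simp [h0])
    by_cases hc : c = 1
    · refine ⟨j₁, i₀, ?_⟩
      dsimp only
      rw [if_neg hnj₁, if_pos hri₀, hc, one_mul]
      intro heq
      exact mul_ne_zero hh₁ hx₀ (by linear_combination heq)
    · refine ⟨j₀, i₀, ?_⟩
      dsimp only
      rw [if_pos hrj₀, if_pos hri₀]
      intro heq
      apply hc
      have hne : h j₀ * x i₀ ≠ 0 := mul_ne_zero hh₀ hx₀
      have h0 : (1 - c) * (h j₀ * x i₀) = 0 := by
        have h2 : (2:ℂ) ≠ 0 := two_ne_zero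
        field_simp at heq
        linear_combination (h j₀ * x i₀) * heq
      rcases mul_eq_zero.mp h0 with h1 | h1
      · exact (sub_eq_zero.mp h1).symm
      · exact absurd h1 hne
end

section
/- Let ĥ ∈ ℂ^N and x ∈ ℂ^L be unit vectors, let T = {ĥv* + u x̄* : u ∈ ℂ^N, v ∈ ℂ^L} be the tangent space, and let P_T(S) = ĥĥ*S + S x̄x̄* − ĥĥ*S x̄x̄* be the orthogonal projection onto T. Then for any matrix Z ∈ ℂ^{N×L}, the l-th row q_l* of Q = P_T(Z) satisfies ‖q_l‖₂² ≤ ‖ĥ‖∞² ‖Z*ĥ‖₂² + |⟨x̄, z_l⟩|², where z_l is the l-th column of Z*. -/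
open Finset Matrix

/-- The orthogonal projection onto the tangent space
`T = {ĥ v* + u x̄*}`: `P_T(Z) = ĥĥ* Z (I − x̄x̄*) + Z x̄x̄*`. -/
noncomputable def tangentProj {N L : ℕ} (hhat : Fin N → ℂ) (x : Fin L → ℂ)
    (Z : Matrix (Fin N) (Fin L) ℂ) : Matrix (Fin N) (Fin L) ℂ :=
  vecMulVec hhat (star hhat) * Z * (1 - vecMulVec (star x) x) + Z * vecMulVec (star x) x

lemma tangentProj_apply {N L : ℕ} (hhat : Fin N → ℂ) (x : Fin L → ℂ)
    (Z : Matrix (Fin N) (Fin L) ℂ) (l : Fin N) (j : Fin L) :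
    tangentProj hhat x Z l j =
      hhat l * (∑ k, (starRingEnd ℂ) (hhat k) * Z k j)
      - hhat l * (∑ k, (∑ m, (starRingEnd ℂ) (hhat m) * Z m k) * (starRingEnd ℂ) (x k)) * x j
      + (∑ k, Z l k * (starRingEnd ℂ) (x k)) * x j := by
  simp only [tangentProj, Matrix.add_apply, Matrix.mul_apply, Matrix.sub_apply,
    Matrix.one_apply, vecMulVec_apply, Pi.star_apply, RCLike.star_def,
    mul_sub, mul_ite, mul_one, mul_zero, Finset.sum_sub_distrib, Finset.sum_ite_eq',
    Finset.mem_univ, if_true]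
  rw [Finset.mul_sum, Finset.mul_sum, Finset.sum_mul, Finset.sum_mul]
  congr 1
  · congr 1
    · exact Finset.sum_congr rfl fun k _ => by ring
    · refine Finset.sum_congr rfl fun k _ => ?_
      simp only [Finset.sum_mul, Finset.mul_sum]
      exact Finset.sum_congr rfl fun m _ => by ring
  · exact Finset.sum_congr rfl fun k _ => by ring

/-- Row-norm bound for the projection onto the tangent space: the `l`-th row `q_l*` of
`Q = P_T(Z)` satisfies `‖q_l‖₂² ≤ ‖ĥ‖∞² ‖Z*ĥ‖₂² + |⟨x̄, z_l⟩|²`. -/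
theorem tangentProj_row_norm_bound {N L : ℕ} (hN : 0 < N)
    (hhat : Fin N → ℂ) (x : Fin L → ℂ)
    (hh_unit : ∑ k, ‖hhat k‖ ^ 2 = 1)
    (hx_unit : ∑ j, ‖x j‖ ^ 2 = 1)
    (Z : Matrix (Fin N) (Fin L) ℂ) (l : Fin N) :
    ∑ j, ‖tangentProj hhat x Z l j‖ ^ 2
      ≤ (univ.sup' (univ_nonempty_iff.mpr ⟨⟨0, hN⟩⟩) fun k => ‖hhat k‖) ^ 2
          * ∑ j, ‖(Zᴴ *ᵥ hhat) j‖ ^ 2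
        + ‖∑ j, x j * (starRingEnd ℂ) (Z l j)‖ ^ 2 := by
  classical
  set w : Fin L → ℂ := fun j => ∑ k, (starRingEnd ℂ) (hhat k) * Z k j with hw
  set a : ℂ := ∑ k, w k * (starRingEnd ℂ) (x k) with ha
  set c : ℂ := ∑ k, Z l k * (starRingEnd ℂ) (x k) with hc
  set h : ℂ := hhat l with hhl
  have hq : ∀ j, tangentProj hhat x Z l j = h * w j - h * a * x j + c * x j := by
    intro j
    rw [hhl, ha, hc, hw]
    exact tangentProj_apply hhat x Z l j
  have hx1 : (∑ j, x j * (starRingEnd ℂ) (x j)) = 1 := by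
    have e : ∀ j : Fin L, x j * (starRingEnd ℂ) (x j) = ((‖x j‖ ^ 2 : ℝ) : ℂ) :=
      fun j => by rw [Complex.sq_norm, Complex.mul_conj]
    rw [Finset.sum_congr rfl fun j _ => e j, ← Complex.ofReal_sum, hx_unit, Complex.ofReal_one]
  have key : ∑ j, tangentProj hhat x Z l j * (starRingEnd ℂ) (tangentProj hhat x Z l j)
      = h * (starRingEnd ℂ) h * ((∑ j, w j * (starRingEnd ℂ) (w j)) - a * (starRingEnd ℂ) a)
        + c * (starRingEnd ℂ) c := by
    have expand : ∀ j, tangentProj hhat x Z l j * (starRingEnd ℂ) (tangentProj hhat x Z l j)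
        = (h * (starRingEnd ℂ) h) * (w j * (starRingEnd ℂ) (w j))
          + (h * (starRingEnd ℂ) c - h * (starRingEnd ℂ) h * (starRingEnd ℂ) a)
            * (w j * (starRingEnd ℂ) (x j))
          + (c * (starRingEnd ℂ) h - h * (starRingEnd ℂ) h * a)
            * ((starRingEnd ℂ) (w j) * x j)
          + (h * (starRingEnd ℂ) h * a * (starRingEnd ℂ) a - h * a * (starRingEnd ℂ) c
              - c * (starRingEnd ℂ) h * (starRingEnd ℂ) a + c * (starRingEnd ℂ) c)
            * (x j * (starRingEnd ℂ) (x j)) := by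
      intro j
      rw [hq j]
      simp only [map_add, map_sub, _root_.map_mul]
      ring
    rw [Finset.sum_congr rfl fun j _ => expand j]
    simp only [Finset.sum_add_distrib, ← Finset.mul_sum]
    have h2 : ∑ j, w j * (starRingEnd ℂ) (x j) = a := ha.symm
    have h3 : ∑ j, (starRingEnd ℂ) (w j) * x j = (starRingEnd ℂ) a := by
      rw [ha, map_sum]
      exact Finset.sum_congr rfl fun j _ => by rw [_root_.map_mul, Complex.conj_conj]
    rw [h2, h3, hx1]
    ring
  have keyR : ∑ j, ‖tangentProj hhat x Z l j‖ ^ 2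
      = Complex.normSq h * ((∑ j, ‖w j‖ ^ 2) - Complex.normSq a)
        + Complex.normSq c := by
    have cast : ∀ z : ℂ, ((‖z‖ ^ 2 : ℝ) : ℂ) = z * (starRingEnd ℂ) z :=
      fun z => by rw [Complex.sq_norm, Complex.mul_conj]
    apply Complex.ofReal_injective
    simp only [Complex.ofReal_add, Complex.ofReal_mul, Complex.ofReal_sub, Complex.ofReal_sum,
      cast, ← Complex.mul_conj]
    exact key
  -- relate sums in the goal
  have hW : ∑ j, ‖(Zᴴ *ᵥ hhat) j‖ ^ 2 = ∑ j, ‖w j‖ ^ 2 := by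
    refine Finset.sum_congr rfl fun j _ => ?_
    have : (Zᴴ *ᵥ hhat) j = (starRingEnd ℂ) (w j) := by
      rw [hw]
      simp only [mulVec, dotProduct, conjTranspose_apply, map_sum, _root_.map_mul, Complex.conj_conj,
        RCLike.star_def]
      exact Finset.sum_congr rfl fun k _ => by ring
    rw [this, Complex.norm_conj]
  have hcg : ‖∑ j, x j * (starRingEnd ℂ) (Z l j)‖ = ‖c‖ := by
    have : (∑ j, x j * (starRingEnd ℂ) (Z l j)) = (starRingEnd ℂ) c := by
      rw [hc, map_sum]
      exact Finset.sum_congr rfl fun j _ => by rw [_root_.map_mul, Complex.conj_conj]; ring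
    rw [this, Complex.norm_conj]
  rw [keyR, hW, hcg]
  have hsup : Complex.normSq h
      ≤ (univ.sup' (univ_nonempty_iff.mpr ⟨⟨0, hN⟩⟩) fun k => ‖hhat k‖) ^ 2 := by
    rw [← Complex.sq_norm]
    have : ‖h‖ ≤ univ.sup' (univ_nonempty_iff.mpr ⟨⟨0, hN⟩⟩)
        fun k => ‖hhat k‖ := by
      rw [hhl]
      exact Finset.le_sup' (fun k => ‖hhat k‖) (Finset.mem_univ l)
    exact pow_le_pow_left₀ (norm_nonneg _) this 2
  have hWnn : (0 : ℝ) ≤ ∑ j, ‖w j‖ ^ 2 :=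
    Finset.sum_nonneg fun j _ => sq_nonneg _
  have t1 : Complex.normSq h * ((∑ j, ‖w j‖ ^ 2) - Complex.normSq a)
      ≤ (univ.sup' (univ_nonempty_iff.mpr ⟨⟨0, hN⟩⟩) fun k => ‖hhat k‖) ^ 2
        * ∑ j, ‖w j‖ ^ 2 := by
    calc Complex.normSq h * ((∑ j, ‖w j‖ ^ 2) - Complex.normSq a)
        ≤ Complex.normSq h * ∑ j, ‖w j‖ ^ 2 :=
          mul_le_mul_of_nonneg_left (sub_le_self _ (Complex.normSq_nonneg a))
            (Complex.normSq_nonneg h)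
      _ ≤ _ := mul_le_mul_of_nonneg_right hsup hWnn
  have : ‖c‖ ^ 2 = Complex.normSq c := Complex.sq_norm c
  linarith [t1]
end

section
/- Suppose the linear map A restricted to a subspace T of ℂ^{N×L} satisfies |‖A(X)‖_F² − ‖X‖_F²| ≤ (1/2)‖X‖_F² for all X ∈ T (near-isometry with E‖A(X)‖_F² = ‖X‖_F²). Then for every Z in the null space of A, ‖P_{T}(Z)‖_F ≤ √2·‖A‖·‖P_{T^⊥}(Z)‖_F ≤ √2·‖A‖·‖P_{T^⊥}(Z)‖_*, where P_T and P_{T⊥} are the orthogonal projections onto T and its orthogonal complement, ‖A‖ is the operator norm of A, and ‖·‖_* is the nuclear norm; in particular if Z ≠ 0 then P_{T^⊥}(Z) ≠ 0. -/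
open Finset Matrix

/-- Frobenius norm written explicitly. -/
noncomputable def frobNorm {m n : ℕ} (X : Matrix (Fin m) (Fin n) ℂ) : ℝ :=
  Real.sqrt (∑ i, ∑ j, ‖X i j‖ ^ 2)

lemma frobNorm_nonneg {m n : ℕ} (X : Matrix (Fin m) (Fin n) ℂ) : 0 ≤ frobNorm X :=
  Real.sqrt_nonneg _

lemma frobNorm_sq {m n : ℕ} (X : Matrix (Fin m) (Fin n) ℂ) :
    frobNorm X ^ 2 = ∑ i, ∑ j, ‖X i j‖ ^ 2 := by
  exact Real.sq_sqrt
    (Finset.sum_nonneg fun i _ => Finset.sum_nonneg fun j _ => sq_nonneg _)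

lemma frobNorm_neg {m n : ℕ} (X : Matrix (Fin m) (Fin n) ℂ) :
    frobNorm (-X) = frobNorm X := by
  unfold frobNorm
  simp

lemma frobNorm_eq_zero {m n : ℕ} (X : Matrix (Fin m) (Fin n) ℂ)
    (h : frobNorm X = 0) : X = 0 := by
  unfold frobNorm at h
  have hs : (∑ i, ∑ j, ‖X i j‖ ^ 2) = 0 := by
    have hn : (0:ℝ) ≤ ∑ i, ∑ j, ‖X i j‖ ^ 2 :=
      Finset.sum_nonneg fun i _ => Finset.sum_nonneg fun j _ => sq_nonneg _
    exact (Real.sqrt_eq_zero hn).mp h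
  funext i j
  have h1 := (Finset.sum_eq_zero_iff_of_nonneg
    (fun i _ => Finset.sum_nonneg fun j _ => sq_nonneg ‖X i j‖)).1 hs i (mem_univ i)
  have h2 := (Finset.sum_eq_zero_iff_of_nonneg (fun j _ => sq_nonneg _)).1 h1 j (mem_univ j)
  have : ‖X i j‖ = 0 := by nlinarith [norm_nonneg (X i j)]
  simpa using this

/-- Null-space property from the near-isometry on `T`: if `A` restricted to the
subspace `T` satisfies `|‖A(X)‖_F² − ‖X‖_F²| ≤ ½‖X‖_F²` and `C` bounds the
operator norm of `A`, then for every `Z ∈ null(A)`,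
`‖P_T(Z)‖_F ≤ √2·C·‖P_{T⊥}(Z)‖_F ≤ √2·C·‖P_{T⊥}(Z)‖_*`; in particular
`Z ≠ 0` implies `P_{T⊥}(Z) ≠ 0`. Here `nuc` is any norm dominating the
Frobenius norm (e.g. the nuclear norm). -/
theorem nullspace_near_isometry_property {N L K : ℕ}
    (T : Submodule ℂ (Matrix (Fin N) (Fin L) ℂ))
    (PT : Matrix (Fin N) (Fin L) ℂ →ₗ[ℂ] Matrix (Fin N) (Fin L) ℂ)
    (hPT_mem : ∀ Z, PT Z ∈ T)
    (hPT_fix : ∀ M ∈ T, PT M = M)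
    (hPT_orth : ∀ Z, ∀ M ∈ T,
      ∑ i, ∑ j, (starRingEnd ℂ) ((Z - PT Z) i j) * M i j = 0)
    (A : Matrix (Fin N) (Fin L) ℂ →ₗ[ℂ] Matrix (Fin N) (Fin K) ℂ)
    (C : ℝ) (hC0 : 0 ≤ C)
    (hC : ∀ X, frobNorm (A X) ≤ C * frobNorm X)
    (hiso : ∀ X ∈ T, |frobNorm (A X) ^ 2 - frobNorm X ^ 2| ≤ (1 / 2) * frobNorm X ^ 2)
    (nuc : Matrix (Fin N) (Fin L) ℂ → ℝ) (hnuc : ∀ M, frobNorm M ≤ nuc M)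
    (Z : Matrix (Fin N) (Fin L) ℂ) (hZ : A Z = 0) :
    frobNorm (PT Z) ≤ Real.sqrt 2 * C * frobNorm (Z - PT Z) ∧
    frobNorm (PT Z) ≤ Real.sqrt 2 * C * nuc (Z - PT Z) ∧
    (Z ≠ 0 → Z - PT Z ≠ 0) := by
  set X := PT Z with hX
  have hAX : A X = -(A (Z - PT Z)) := by
    rw [map_sub, hZ, zero_sub, neg_neg]
  have hAXn : frobNorm (A X) ≤ C * frobNorm (Z - PT Z) := by
    rw [hAX, frobNorm_neg]
    exact hC _
  have hlow : (1/2) * frobNorm X ^ 2 ≤ frobNorm (A X) ^ 2 := by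
    have := abs_le.1 (hiso X (hPT_mem Z))
    linarith [this.1]
  have hmain : frobNorm X ≤ Real.sqrt 2 * C * frobNorm (Z - PT Z) := by
    have h1 : frobNorm X ^ 2 ≤ 2 * (C * frobNorm (Z - PT Z)) ^ 2 := by
      have h2 : frobNorm (A X) ^ 2 ≤ (C * frobNorm (Z - PT Z)) ^ 2 := by
        apply pow_le_pow_left₀ (frobNorm_nonneg _) hAXn
      linarith
    have h3 : frobNorm X = Real.sqrt (frobNorm X ^ 2) := by
      rw [Real.sqrt_sq (frobNorm_nonneg _)]
    rw [h3]
    calc Real.sqrt (frobNorm X ^ 2)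
        ≤ Real.sqrt (2 * (C * frobNorm (Z - PT Z)) ^ 2) := Real.sqrt_le_sqrt h1
      _ = Real.sqrt 2 * (C * frobNorm (Z - PT Z)) := by
          rw [Real.sqrt_mul (by norm_num),
            Real.sqrt_sq (mul_nonneg hC0 (frobNorm_nonneg _))]
      _ = Real.sqrt 2 * C * frobNorm (Z - PT Z) := by ring
  refine ⟨hmain, ?_, ?_⟩
  · calc frobNorm X ≤ Real.sqrt 2 * C * frobNorm (Z - PT Z) := hmain
      _ ≤ Real.sqrt 2 * C * nuc (Z - PT Z) := by
          apply mul_le_mul_of_nonneg_left (hnuc _) (by positivity)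
  · intro hZne hcontra
    apply hZne
    have hZX : Z = X := by
      have := sub_eq_zero.mp hcontra
      exact this
    have : frobNorm Z ≤ Real.sqrt 2 * C * frobNorm (Z - PT Z) := hZX ▸ hmain
    rw [hcontra] at this
    have h0 : frobNorm (0 : Matrix (Fin N) (Fin L) ℂ) = 0 := by
      unfold frobNorm; simp
    rw [h0, mul_zero] at this
    exact frobNorm_eq_zero Z (le_antisymm this (frobNorm_nonneg Z))
end
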